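/- arXiv:1310.3576 — 3 statements merged into one kernel-verified Lean document; each statement's English description precedes it below -/
import Mathlib

section
/- Let θ ∈ (0, π/2), set b = 4θ/π, and define φ(x,y) = Re((x + iy)^b · e^{-iθ}) using the principal complex power. Then for every real x > 0, the gradient of φ at (x,0) equals b·x^{b−1}·(cos θ, sin θ), and for every real y > 0, the gradient of φ at (0,y) equals b·y^{b−1}·(sin θ, cos θ). -/
open Real

lemma aux_fderiv (b θ : ℝ) (z : ℂ) (hz : z ∈ Complex.slitPlane)
    (φ : ℝ × ℝ → ℝ)
    (hφ : ∀ p : ℝ × ℝ,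
      φ p = ((((p.1 : ℂ) + (p.2 : ℂ) * Complex.I) ^ (b : ℂ))
          * Complex.exp (-(θ : ℂ) * Complex.I)).re) :
    DifferentiableAt ℝ φ (z.re, z.im) ∧
    fderiv ℝ φ (z.re, z.im) (1, 0)
      = ((b : ℂ) * z ^ ((b : ℂ) - 1) * Complex.exp (-(θ : ℂ) * Complex.I)).re ∧
    fderiv ℝ φ (z.re, z.im) (0, 1)
      = (Complex.I * ((b : ℂ) * z ^ ((b : ℂ) - 1) * Complex.exp (-(θ : ℂ) * Complex.I))).re := by
  set g' : ℂ := (b : ℂ) * z ^ ((b : ℂ) - 1) * Complex.exp (-(θ : ℂ) * Complex.I) with hg'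
  have hd : HasDerivAt (fun w : ℂ => w ^ (b : ℂ) * Complex.exp (-(θ : ℂ) * Complex.I)) g' z :=
    ((Complex.hasStrictDerivAt_cpow_const hz).hasDerivAt).mul_const _
  have hD : HasFDerivAt (fun w : ℂ => w ^ (b : ℂ) * Complex.exp (-(θ : ℂ) * Complex.I))
      ((ContinuousLinearMap.smulRight (1 : ℂ →L[ℂ] ℂ) g').restrictScalars ℝ) z :=
    hd.hasFDerivAt.restrictScalars ℝ
  have he : HasFDerivAt (fun p : ℝ × ℝ => (p.1 : ℂ) + (p.2 : ℂ) * Complex.I)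
      (Complex.equivRealProdCLM.symm : (ℝ × ℝ) →L[ℝ] ℂ) (z.re, z.im) := by
    have : (fun p : ℝ × ℝ => (p.1 : ℂ) + (p.2 : ℂ) * Complex.I)
        = ⇑(Complex.equivRealProdCLM.symm : (ℝ × ℝ) →L[ℝ] ℂ) := by
      funext p; simp [Complex.equivRealProdCLM_symm_apply]
    rw [this]
    exact (Complex.equivRealProdCLM.symm : (ℝ × ℝ) →L[ℝ] ℂ).hasFDerivAt
  have hez : Complex.equivRealProdCLM.symm ((z.re : ℝ), z.im) = z := by
    simp [Complex.equivRealProdCLM_symm_apply]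
  have hcomp : HasFDerivAt φ
      ((Complex.reCLM : ℂ →L[ℝ] ℝ).comp
        (((ContinuousLinearMap.smulRight (1 : ℂ →L[ℂ] ℂ) g').restrictScalars ℝ).comp
          (Complex.equivRealProdCLM.symm : (ℝ × ℝ) →L[ℝ] ℂ))) (z.re, z.im) := by
    have hD2 : HasFDerivAt (fun w : ℂ => w ^ (b : ℂ) * Complex.exp (-(θ : ℂ) * Complex.I))
        ((ContinuousLinearMap.smulRight (1 : ℂ →L[ℂ] ℂ) g').restrictScalars ℝ)
        ((((z.re, z.im) : ℝ × ℝ).1 : ℂ) + (((z.re, z.im) : ℝ × ℝ).2 : ℂ) * Complex.I) := by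
      simpa [Complex.re_add_im] using hD
    have h1 := hD2.comp (z.re, z.im) he
    have h2 := (Complex.reCLM.hasFDerivAt).comp (z.re, z.im) h1
    have : φ = fun p : ℝ × ℝ => Complex.reCLM
        ((((p.1 : ℂ) + (p.2 : ℂ) * Complex.I) ^ (b : ℂ)) * Complex.exp (-(θ : ℂ) * Complex.I)) := by
      funext p; rw [hφ]; rfl
    rw [this]
    rw [← ContinuousLinearMap.comp_assoc]
    exact h2
  refine ⟨hcomp.differentiableAt, ?_, ?_⟩ <;> rw [hcomp.fderiv] <;>
    simp [Complex.equivRealProdCLM_symm_apply, smul_eq_mul]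

/-- For `θ ∈ (0, π/2)`, `b = 4θ/π` and `φ(x,y) = Re((x+iy)^b e^{-iθ})` (principal power):
for `x > 0`, `∇φ(x,0) = b x^{b-1} (cos θ, sin θ)`, and for `y > 0`,
`∇φ(0,y) = b y^{b-1} (sin θ, cos θ)`. -/
theorem stmt_10 (θ : ℝ) (hθ : θ ∈ Set.Ioo 0 (π / 2)) (b : ℝ) (hb : b = 4 * θ / π)
    (φ : ℝ × ℝ → ℝ)
    (hφ : ∀ p : ℝ × ℝ,
      φ p = ((((p.1 : ℂ) + (p.2 : ℂ) * Complex.I) ^ (b : ℂ))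
          * Complex.exp (-(θ : ℂ) * Complex.I)).re) :
    (∀ x : ℝ, 0 < x →
      DifferentiableAt ℝ φ (x, 0) ∧
      fderiv ℝ φ (x, 0) (1, 0) = b * x ^ (b - 1) * Real.cos θ ∧
      fderiv ℝ φ (x, 0) (0, 1) = b * x ^ (b - 1) * Real.sin θ) ∧
    (∀ y : ℝ, 0 < y →
      DifferentiableAt ℝ φ (0, y) ∧
      fderiv ℝ φ (0, y) (1, 0) = b * y ^ (b - 1) * Real.sin θ ∧
      fderiv ℝ φ (0, y) (0, 1) = b * y ^ (b - 1) * Real.cos θ) := by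
  constructor
  · intro x hx
    obtain ⟨hdiff, h1, h2⟩ := aux_fderiv b θ (x : ℂ)
      (by simp [Complex.mem_slitPlane_iff, hx]) φ hφ
    simp only [Complex.ofReal_re, Complex.ofReal_im] at hdiff h1 h2
    have hx1 : ((x : ℂ)) ^ ((b : ℂ) - 1) = ((x ^ (b - 1) : ℝ) : ℂ) := by
      rw [show ((b : ℂ) - 1) = ((b - 1 : ℝ) : ℂ) by push_cast; ring,
        ← Complex.ofReal_cpow hx.le]
    refine ⟨hdiff, ?_, ?_⟩
    · rw [h1, hx1]
      simp [Complex.mul_re, Complex.mul_im, Complex.exp_re, Complex.exp_im]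
    · rw [h2, hx1]
      simp [Complex.mul_re, Complex.mul_im, Complex.exp_re, Complex.exp_im]
  · intro y hy
    obtain ⟨hdiff, h1, h2⟩ := aux_fderiv b θ ((y : ℂ) * Complex.I)
      (by simp [Complex.mem_slitPlane_iff, hy.ne']) φ hφ
    simp only [Complex.mul_I_re, Complex.mul_I_im, Complex.ofReal_re, Complex.ofReal_im,
      neg_zero] at hdiff h1 h2
    have key : ((y : ℂ) * Complex.I) ^ ((b : ℂ) - 1)
        = Complex.exp (((b : ℂ) - 1) * ((Real.log y : ℂ) + ((π / 2 : ℝ) : ℂ) * Complex.I)) := by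
      rw [Complex.cpow_def_of_ne_zero (by simp [hy.ne'] : (y : ℂ) * Complex.I ≠ 0),
        Complex.log_ofReal_mul hy Complex.I_ne_zero, Complex.log_I]
      push_cast
      ring_nf
    have hexp : ((b : ℂ) - 1) * ((Real.log y : ℂ) + ((π / 2 : ℝ) : ℂ) * Complex.I)
          + (-(θ : ℂ) * Complex.I)
        = (((b - 1) * Real.log y : ℝ) : ℂ) + (((b - 1) * (π / 2) - θ : ℝ) : ℂ) * Complex.I := by
      push_cast; ring
    have hE : Real.exp ((b - 1) * Real.log y) = y ^ (b - 1) := by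
      rw [Real.rpow_def_of_pos hy]; ring_nf
    have hA : (b - 1) * (π / 2) - θ = θ - π / 2 := by
      rw [hb]; field_simp; ring
    refine ⟨hdiff, ?_, ?_⟩
    · rw [h1, key, mul_assoc, ← Complex.exp_add, hexp]
      simp [Complex.mul_re, Complex.mul_im, Complex.exp_re, Complex.exp_im, hE, hA,
        Real.cos_sub, Real.sin_sub]
      ring
    · rw [h2, key, mul_assoc, ← Complex.exp_add, hexp]
      simp [Complex.mul_re, Complex.mul_im, Complex.exp_re, Complex.exp_im, hE, hA,
        Real.cos_sub, Real.sin_sub]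
      ring
end

section
/- Let θ ∈ (0, π/2), b = 4θ/π, φ(x,y) = Re((x + iy)^b · e^{-iθ}) (principal complex power), and let Θ ∈ [θ, π/2). Then for every real x > 0, v₁(Θ)·∇φ(x,0) ≤ 0, and for every real y > 0, v₂(Θ)·∇φ(0,y) ≤ 0, where v₁(Θ) = (−tan Θ, 1), v₂(Θ) = (1, −tan Θ), ∇φ is the gradient of φ, and · the Euclidean inner product on ℝ². -/
open Real

noncomputable def Lc : ℝ × ℝ →L[ℝ] ℂ :=
  Complex.ofRealCLM.comp (ContinuousLinearMap.fst ℝ ℝ ℝ) +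
  Complex.I • Complex.ofRealCLM.comp (ContinuousLinearMap.snd ℝ ℝ ℝ)

lemma Lc_apply (p : ℝ × ℝ) : Lc p = (p.1 : ℂ) + (p.2 : ℂ) * Complex.I := by
  simp [Lc, mul_comm]

lemma key_fderiv (b θ x y : ℝ) (h : (x:ℂ) + (y:ℂ) * Complex.I ∈ Complex.slitPlane) :
    HasFDerivAt
      (fun p : ℝ × ℝ => ((((p.1 : ℂ) + (p.2 : ℂ) * Complex.I) ^ (b : ℂ))
          * Complex.exp (-(θ : ℂ) * Complex.I)).re)
      (Complex.reCLM.comp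
        (((ContinuousLinearMap.smulRight (1 : ℂ →L[ℂ] ℂ)
            ((b:ℂ) * ((x:ℂ) + (y:ℂ) * Complex.I) ^ ((b:ℂ) - 1)
              * Complex.exp (-(θ:ℂ) * Complex.I))).restrictScalars ℝ).comp Lc))
      (x, y) := by
  set d : ℂ := (b:ℂ) * ((x:ℂ) + (y:ℂ) * Complex.I) ^ ((b:ℂ) - 1)
      * Complex.exp (-(θ:ℂ) * Complex.I) with hd
  have hL : HasFDerivAt (fun p : ℝ × ℝ => (p.1 : ℂ) + (p.2 : ℂ) * Complex.I) Lc (x, y) := by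
    refine (Lc.hasFDerivAt (x := (x, y))).congr_of_eventuallyEq ?_
    exact Filter.Eventually.of_forall fun p => (Lc_apply p).symm
  have hF : HasDerivAt (fun z : ℂ => z ^ (b:ℂ) * Complex.exp (-(θ:ℂ) * Complex.I)) d
      ((x:ℂ) + (y:ℂ) * Complex.I) :=
    ((Complex.hasStrictDerivAt_cpow_const h).hasDerivAt).mul_const _
  have hF' : HasFDerivAt (fun z : ℂ => z ^ (b:ℂ) * Complex.exp (-(θ:ℂ) * Complex.I))
      ((ContinuousLinearMap.smulRight (1 : ℂ →L[ℂ] ℂ) d).restrictScalars ℝ)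
      ((x:ℂ) + (y:ℂ) * Complex.I) := hF.hasFDerivAt.restrictScalars ℝ
  exact Complex.reCLM.hasFDerivAt.comp _ (hF'.comp (x, y) hL)

lemma fderiv_val (b θ x y : ℝ) (h : (x:ℂ) + (y:ℂ) * Complex.I ∈ Complex.slitPlane)
    (φ : ℝ × ℝ → ℝ)
    (hφ : ∀ p : ℝ × ℝ,
      φ p = ((((p.1 : ℂ) + (p.2 : ℂ) * Complex.I) ^ (b : ℂ))
          * Complex.exp (-(θ : ℂ) * Complex.I)).re) (u v : ℝ) :
    fderiv ℝ φ (x, y) (u, v)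
      = (((b:ℂ) * ((x:ℂ) + (y:ℂ) * Complex.I) ^ ((b:ℂ) - 1)
          * Complex.exp (-(θ:ℂ) * Complex.I)) * ((u:ℂ) + (v:ℂ) * Complex.I)).re := by
  have hφ' : φ = fun p : ℝ × ℝ => ((((p.1 : ℂ) + (p.2 : ℂ) * Complex.I) ^ (b : ℂ))
      * Complex.exp (-(θ : ℂ) * Complex.I)).re := funext hφ
  subst hφ'
  rw [(key_fderiv b θ x y h).fderiv]
  simp [Lc_apply, smul_eq_mul, mul_comm]

lemma sign_key (θ Θ : ℝ) (hθ0 : 0 < θ) (hθΘ : θ ≤ Θ) (hΘ : Θ < π/2) (c : ℝ) (hc : 0 ≤ c) :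
    c * Real.sin θ - Real.tan Θ * (c * Real.cos θ) ≤ 0 := by
  have hcosΘ : 0 < Real.cos Θ := Real.cos_pos_of_mem_Ioo ⟨by linarith [Real.pi_pos], hΘ⟩
  have hsin : Real.sin (θ - Θ) ≤ 0 := by
    apply Real.sin_nonpos_of_nonpos_of_neg_pi_le (by linarith)
    nlinarith [Real.pi_pos]
  rw [Real.sin_sub] at hsin
  rw [Real.tan_eq_sin_div_cos]
  rw [div_mul_eq_mul_div, sub_nonpos, le_div_iff₀ hcosΘ]
  nlinarith

/-- For `θ ∈ (0, π/2)`, `b = 4θ/π`, `φ(x,y) = Re((x+iy)^b e^{-iθ})` (principal power)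
and `Θ ∈ [θ, π/2)`: for all `x > 0`, `v₁(Θ)·∇φ(x,0) ≤ 0`, and for all `y > 0`,
`v₂(Θ)·∇φ(0,y) ≤ 0`, where `v₁(Θ) = (-tan Θ, 1)` and `v₂(Θ) = (1, -tan Θ)`. -/
theorem stmt_11 (θ : ℝ) (hθ : θ ∈ Set.Ioo 0 (π / 2)) (b : ℝ) (hb : b = 4 * θ / π)
    (φ : ℝ × ℝ → ℝ)
    (hφ : ∀ p : ℝ × ℝ,
      φ p = ((((p.1 : ℂ) + (p.2 : ℂ) * Complex.I) ^ (b : ℂ))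
          * Complex.exp (-(θ : ℂ) * Complex.I)).re)
    (Θ : ℝ) (hΘ : Θ ∈ Set.Ico θ (π / 2)) :
    (∀ x : ℝ, 0 < x →
      (-Real.tan Θ) * fderiv ℝ φ (x, 0) (1, 0) + 1 * fderiv ℝ φ (x, 0) (0, 1) ≤ 0) ∧
    (∀ y : ℝ, 0 < y →
      1 * fderiv ℝ φ (0, y) (1, 0) + (-Real.tan Θ) * fderiv ℝ φ (0, y) (0, 1) ≤ 0) := by
  have hπ := Real.pi_pos
  have hθ0 := hθ.1
  have hbpos : 0 < b := by rw [hb]; positivity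
  constructor
  · intro x hx
    have hslit : (x:ℂ) + ((0:ℝ):ℂ) * Complex.I ∈ Complex.slitPlane := by
      simp [Complex.mem_slitPlane_iff, hx]
    rw [fderiv_val b θ x 0 hslit φ hφ 1 0, fderiv_val b θ x 0 hslit φ hφ 0 1]
    have hpow : ((x:ℂ) + ((0:ℝ):ℂ) * Complex.I) ^ ((b:ℂ) - 1) = ((x ^ (b-1) : ℝ) : ℂ) := by
      rw [Complex.ofReal_cpow hx.le]
      push_cast
      ring_nf
    rw [hpow]
    simp [Complex.mul_re, Complex.mul_im, Complex.exp_re, Complex.exp_im]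
    have hc : (0:ℝ) ≤ b * x ^ (b-1) := by positivity
    have := sign_key θ Θ hθ.1 hΘ.1 hΘ.2 (b * x ^ (b-1)) hc
    nlinarith [this]
  · intro y hy
    have hslit : ((0:ℝ):ℂ) + (y:ℂ) * Complex.I ∈ Complex.slitPlane := by
      simp [Complex.mem_slitPlane_iff, hy.ne']
    rw [fderiv_val b θ 0 y hslit φ hφ 1 0, fderiv_val b θ 0 y hslit φ hφ 0 1]
    have hz : ((0:ℝ):ℂ) + (y:ℂ) * Complex.I = ((y:ℝ):ℂ) * Complex.I := by push_cast; ring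
    have hlog : Complex.log ((y:ℂ) * Complex.I) = (Real.log y : ℂ) + (π/2 : ℝ) * Complex.I := by
      rw [Complex.log]
      congr 1
      · rw [norm_mul, Complex.norm_I, Complex.norm_real, Real.norm_of_nonneg hy.le, mul_one]
      · rw [Complex.arg_real_mul Complex.I hy, Complex.arg_I]
    have hpow : (((0:ℝ):ℂ) + (y:ℂ) * Complex.I) ^ ((b:ℂ) - 1)
        = ((y ^ (b-1) : ℝ) : ℂ) * Complex.exp ((((b-1) * (π/2) : ℝ)) * Complex.I) := by
      rw [hz, Complex.cpow_def_of_ne_zero (by simp [hy.ne']), hlog]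
      rw [show ((Real.log y : ℂ) + (π/2 : ℝ) * Complex.I) * ((b:ℂ) - 1)
          = (((b-1) * Real.log y : ℝ) : ℂ) + (((b-1) * (π/2) : ℝ)) * Complex.I by push_cast; ring]
      rw [Complex.exp_add]
      congr 1
      rw [← Complex.ofReal_exp]
      norm_cast
      rw [Real.rpow_def_of_pos hy]
      ring_nf
    rw [hpow]
    have hcomb : Complex.exp ((((b-1) * (π/2) : ℝ)) * Complex.I)
        * Complex.exp (-(θ:ℂ) * Complex.I) = Complex.exp (((θ - π/2 : ℝ)) * Complex.I) := by
      rw [← Complex.exp_add]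
      congr 1
      have h1 : (b-1) * (π/2) - θ = θ - π/2 := by
        rw [hb]; field_simp; ring
      rw [show ((((b-1) * (π/2) : ℝ)) : ℂ) * Complex.I + -(θ:ℂ) * Complex.I
          = (((b-1) * (π/2) - θ : ℝ) : ℂ) * Complex.I by push_cast; ring, h1]
    have hd : (b:ℂ) * ((((0:ℝ):ℂ) + (y:ℂ) * Complex.I) ^ ((b:ℂ) - 1))
        * Complex.exp (-(θ:ℂ) * Complex.I)
        = ((b * y ^ (b-1) : ℝ) : ℂ) * Complex.exp (((θ - π/2 : ℝ) : ℂ) * Complex.I) := by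
      rw [hpow, show (b:ℂ) * (((y ^ (b-1) : ℝ) : ℂ) * Complex.exp ((((b-1) * (π/2) : ℝ)) * Complex.I))
          * Complex.exp (-(θ:ℂ) * Complex.I)
          = ((b:ℂ) * ((y ^ (b-1) : ℝ) : ℂ)) * (Complex.exp ((((b-1) * (π/2) : ℝ)) * Complex.I)
            * Complex.exp (-(θ:ℂ) * Complex.I)) by ring, hcomb]
      push_cast
      ring
    rw [hpow] at hd
    rw [hd]
    simp [Complex.mul_re, Complex.mul_im, Complex.exp_re, Complex.exp_im,
      Real.cos_sub, Real.sin_sub]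
    have hc : (0:ℝ) ≤ b * y ^ (b-1) := by positivity
    have := sign_key θ Θ hθ.1 hΘ.1 hΘ.2 (b * y ^ (b-1)) hc
    nlinarith [this]
end

section
/- Let 0 < θ̃ < θ < π/2, set b̃ = 4θ̃/π and φ̃(x,y) = Re((x + iy)^{b̃} · e^{-iθ̃}) (principal complex power). Set c = b̃ · cos θ̃ · (tan θ − tan θ̃); then c > 0 and for every Θ ∈ [θ, π/2): for all real x > 0, v₁(Θ)·∇φ̃(x,0) ≤ −c·x^{b̃−1}, and for all real y > 0, v₂(Θ)·∇φ̃(0,y) ≤ −c·y^{b̃−1}, where v₁(Θ) = (−tan Θ, 1), v₂(Θ) = (1, −tan Θ), ∇φ̃ is the gradient of φ̃, and · the Euclidean inner product on ℝ². -/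
open Real


lemma aux_fderiv_s12 (bt θt : ℝ) (φ : ℝ × ℝ → ℝ)
    (hφ : ∀ p : ℝ × ℝ,
      φ p = ((((p.1 : ℂ) + (p.2 : ℂ) * Complex.I) ^ (bt : ℂ))
          * Complex.exp (-(θt : ℂ) * Complex.I)).re)
    (p : ℝ × ℝ) (hp : 0 < p.1 ∨ p.2 ≠ 0) (u v : ℝ) :
    fderiv ℝ φ p (u, v)
      = (((bt : ℂ) * ((p.1 : ℂ) + (p.2 : ℂ) * Complex.I) ^ ((bt : ℂ) - 1)
          * Complex.exp (-(θt : ℂ) * Complex.I)) * ((u : ℂ) + (v : ℂ) * Complex.I)).re := by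
  set L := Complex.equivRealProdCLM.symm.toContinuousLinearMap with hLdef
  have hL : ∀ q : ℝ × ℝ, L q = (q.1 : ℂ) + (q.2 : ℂ) * Complex.I := fun q =>
    Complex.equivRealProdCLM_symm_apply q
  set z : ℂ := (p.1 : ℂ) + (p.2 : ℂ) * Complex.I with hz
  have hzs : z ∈ Complex.slitPlane := by
    rw [Complex.mem_slitPlane_iff]
    simpa [hz] using hp
  set d : ℂ := (bt : ℂ) * z ^ ((bt : ℂ) - 1) * Complex.exp (-(θt : ℂ) * Complex.I) with hd
  have hg : HasDerivAt (fun w : ℂ => w ^ (bt : ℂ) * Complex.exp (-(θt : ℂ) * Complex.I)) d z :=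
    ((Complex.hasStrictDerivAt_cpow_const hzs).hasDerivAt).mul_const _
  have hLfun : (fun q : ℝ × ℝ => (q.1 : ℂ) + (q.2 : ℂ) * Complex.I) = ⇑L :=
    funext fun q => (hL q).symm
  have hLd : HasFDerivAt (fun q : ℝ × ℝ => (q.1 : ℂ) + (q.2 : ℂ) * Complex.I) L p := by
    rw [hLfun]; exact L.hasFDerivAt
  have h1 : HasFDerivAt
      (fun q : ℝ × ℝ => ((q.1 : ℂ) + (q.2 : ℂ) * Complex.I) ^ (bt : ℂ)
        * Complex.exp (-(θt : ℂ) * Complex.I))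
      ((((1 : ℂ →L[ℂ] ℂ).smulRight d).restrictScalars ℝ).comp L) p := by
    have := (hg.hasFDerivAt.restrictScalars ℝ).comp p hLd
    simpa [hz, ContinuousLinearMap.smulRight_one_eq_toSpanSingleton, Function.comp_def] using this
  have h2 : HasFDerivAt φ
      ((Complex.reCLM).comp ((((1 : ℂ →L[ℂ] ℂ).smulRight d).restrictScalars ℝ).comp L)) p := by
    have := (Complex.reCLM.hasFDerivAt).comp p h1
    have hφeq : φ = fun q : ℝ × ℝ =>
        Complex.reCLM (((q.1 : ℂ) + (q.2 : ℂ) * Complex.I) ^ (bt : ℂ)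
          * Complex.exp (-(θt : ℂ) * Complex.I)) := funext fun q => hφ q
    rw [hφeq]
    exact this
  rw [h2.fderiv]
  simp [hL, mul_comm]

lemma aux_exp (t : ℝ) :
    Complex.exp (-(t : ℂ) * Complex.I)
      = ((Real.cos t : ℝ) : ℂ) - ((Real.sin t : ℝ) : ℂ) * Complex.I := by
  rw [show -(t : ℂ) * Complex.I = ((-t : ℝ) : ℂ) * Complex.I by push_cast; ring,
    Complex.exp_mul_I, ← Complex.ofReal_cos, ← Complex.ofReal_sin]
  push_cast [Real.cos_neg, Real.sin_neg]
  ring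

lemma aux_cpow_I (y r : ℝ) (hy : 0 < y) :
    ((y : ℂ) * Complex.I) ^ ((r : ℝ) : ℂ)
      = ((y ^ r : ℝ) : ℂ) * Complex.exp (((r * (π / 2) : ℝ) : ℂ) * Complex.I) := by
  have hne : (y : ℂ) * Complex.I ≠ 0 := by
    simp [Complex.ext_iff, hy.ne']
  rw [Complex.cpow_def_of_ne_zero hne]
  have hlog : Complex.log ((y : ℂ) * Complex.I)
      = ((Real.log y : ℝ) : ℂ) + ((π / 2 : ℝ) : ℂ) * Complex.I := by
    apply Complex.ext
    · simp [Complex.log_re, abs_of_pos hy]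
    · simp [Complex.log_im, Complex.arg_real_mul _ hy, Complex.arg_I]
  rw [hlog]
  rw [show (((Real.log y : ℝ) : ℂ) + ((π / 2 : ℝ) : ℂ) * Complex.I) * (r : ℂ)
      = ((Real.log y * r : ℝ) : ℂ) + ((r * (π / 2) : ℝ) : ℂ) * Complex.I by push_cast; ring,
    Complex.exp_add, ← Complex.ofReal_exp, Real.rpow_def_of_pos hy]

/-- For `0 < θ̃ < θ < π/2`, `b̃ = 4θ̃/π`, `φ̃(x,y) = Re((x+iy)^{b̃} e^{-iθ̃})` (principal
power) and `c = b̃ cos θ̃ (tan θ - tan θ̃)`: `c > 0` and for every `Θ ∈ [θ, π/2)`,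
for all `x > 0`, `v₁(Θ)·∇φ̃(x,0) ≤ -c x^{b̃-1}`, and for all `y > 0`,
`v₂(Θ)·∇φ̃(0,y) ≤ -c y^{b̃-1}`, with `v₁(Θ) = (-tan Θ, 1)` and `v₂(Θ) = (1, -tan Θ)`. -/
theorem stmt_12 (θt θ : ℝ) (h₀ : 0 < θt) (h₁ : θt < θ) (h₂ : θ < π / 2)
    (bt : ℝ) (hbt : bt = 4 * θt / π)
    (φ : ℝ × ℝ → ℝ)
    (hφ : ∀ p : ℝ × ℝ,
      φ p = ((((p.1 : ℂ) + (p.2 : ℂ) * Complex.I) ^ (bt : ℂ))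
          * Complex.exp (-(θt : ℂ) * Complex.I)).re)
    (c : ℝ) (hc : c = bt * Real.cos θt * (Real.tan θ - Real.tan θt)) :
    0 < c ∧
    ∀ Θ : ℝ, Θ ∈ Set.Ico θ (π / 2) →
      (∀ x : ℝ, 0 < x →
        (-Real.tan Θ) * fderiv ℝ φ (x, 0) (1, 0) + 1 * fderiv ℝ φ (x, 0) (0, 1)
          ≤ -c * x ^ (bt - 1)) ∧
      (∀ y : ℝ, 0 < y →
        1 * fderiv ℝ φ (0, y) (1, 0) + (-Real.tan Θ) * fderiv ℝ φ (0, y) (0, 1)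
          ≤ -c * y ^ (bt - 1)) := by
  have hπ := Real.pi_pos
  have hbtpos : 0 < bt := by rw [hbt]; positivity
  have hθt2 : θt < π / 2 := lt_trans h₁ h₂
  have hcos : 0 < Real.cos θt := Real.cos_pos_of_mem_Ioo ⟨by linarith, hθt2⟩
  have htan : Real.tan θt < Real.tan θ :=
    Real.tan_lt_tan_of_nonneg_of_lt_pi_div_two h₀.le h₂ h₁
  have hcpos : 0 < c := by
    rw [hc]; exact mul_pos (mul_pos hbtpos hcos) (sub_pos.2 htan)
  have hsin : Real.sin θt = Real.tan θt * Real.cos θt := by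
    rw [Real.tan_eq_sin_div_cos]; field_simp
  have hcast : ((bt : ℂ) - 1) = ((bt - 1 : ℝ) : ℂ) := by push_cast; ring
  refine ⟨hcpos, fun Θ hΘ => ?_⟩
  obtain ⟨hΘ1, hΘ2⟩ := hΘ
  have htanΘ : Real.tan θ ≤ Real.tan Θ := by
    rcases eq_or_lt_of_le hΘ1 with h | h
    · rw [h]
    · exact (Real.tan_lt_tan_of_lt_of_lt_pi_div_two (by linarith) hΘ2 h).le
  constructor
  · intro x hx
    have hxp : (0 : ℝ) < x ^ (bt - 1) := Real.rpow_pos_of_pos hx _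
    have hpow : ((x : ℂ) + ((0 : ℝ) : ℂ) * Complex.I) ^ ((bt : ℂ) - 1)
        = ((x ^ (bt - 1) : ℝ) : ℂ) := by
      rw [hcast, show (x : ℂ) + ((0 : ℝ) : ℂ) * Complex.I = ((x : ℝ) : ℂ) by push_cast; ring,
        ← Complex.ofReal_cpow hx.le]
    have hA : fderiv ℝ φ (x, 0) (1, 0) = bt * x ^ (bt - 1) * Real.cos θt := by
      rw [aux_fderiv_s12 bt θt φ hφ (x, 0) (Or.inl hx) 1 0]
      simp only [hpow, aux_exp]
      simp only [Complex.mul_re, Complex.mul_im, Complex.sub_re, Complex.sub_im,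
        Complex.add_re, Complex.add_im, Complex.ofReal_re, Complex.ofReal_im,
        Complex.I_re, Complex.I_im, Complex.ofReal_one, Complex.ofReal_zero,
        Complex.one_re, Complex.one_im, Complex.zero_re, Complex.zero_im]
      ring
    have hB : fderiv ℝ φ (x, 0) (0, 1) = bt * x ^ (bt - 1) * Real.sin θt := by
      rw [aux_fderiv_s12 bt θt φ hφ (x, 0) (Or.inl hx) 0 1]
      simp only [hpow, aux_exp]
      simp only [Complex.mul_re, Complex.mul_im, Complex.sub_re, Complex.sub_im,
        Complex.add_re, Complex.add_im, Complex.ofReal_re, Complex.ofReal_im,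
        Complex.I_re, Complex.I_im, Complex.ofReal_one, Complex.ofReal_zero,
        Complex.one_re, Complex.one_im, Complex.zero_re, Complex.zero_im]
      ring
    rw [hA, hB, hc, hsin]
    nlinarith [mul_nonneg (mul_nonneg (mul_nonneg hbtpos.le hcos.le) hxp.le)
      (sub_nonneg.2 htanΘ)]
  · intro y hy
    have hyp : (0 : ℝ) < y ^ (bt - 1) := Real.rpow_pos_of_pos hy _
    have hang : ((bt - 1) * (π / 2) : ℝ) = 2 * θt - π / 2 := by
      rw [hbt]; field_simp; ring
    have hd : (bt : ℂ) * (((0 : ℝ) : ℂ) + (y : ℂ) * Complex.I) ^ ((bt : ℂ) - 1)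
          * Complex.exp (-(θt : ℂ) * Complex.I)
        = ((bt * y ^ (bt - 1) : ℝ) : ℂ)
          * (((Real.sin θt : ℝ) : ℂ) - ((Real.cos θt : ℝ) : ℂ) * Complex.I) := by
      rw [show ((0 : ℝ) : ℂ) + (y : ℂ) * Complex.I = (y : ℂ) * Complex.I by push_cast; ring,
        hcast, aux_cpow_I y (bt - 1) hy, hang]
      have hcomb : Complex.exp (((2 * θt - π / 2 : ℝ) : ℂ) * Complex.I)
          * Complex.exp (-(θt : ℂ) * Complex.I)
          = Complex.exp (((θt - π / 2 : ℝ) : ℂ) * Complex.I) := by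
        rw [← Complex.exp_add]; push_cast; ring_nf
      have hval : Complex.exp (((θt - π / 2 : ℝ) : ℂ) * Complex.I)
          = ((Real.sin θt : ℝ) : ℂ) - ((Real.cos θt : ℝ) : ℂ) * Complex.I := by
        rw [Complex.exp_mul_I, ← Complex.ofReal_cos, ← Complex.ofReal_sin,
          Real.cos_sub_pi_div_two, Real.sin_sub_pi_div_two]
        push_cast; ring
      calc (bt : ℂ) * (((y ^ (bt - 1) : ℝ) : ℂ)
              * Complex.exp (((2 * θt - π / 2 : ℝ) : ℂ) * Complex.I))
            * Complex.exp (-(θt : ℂ) * Complex.I)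
          = ((bt * y ^ (bt - 1) : ℝ) : ℂ)
              * (Complex.exp (((2 * θt - π / 2 : ℝ) : ℂ) * Complex.I)
                * Complex.exp (-(θt : ℂ) * Complex.I)) := by push_cast; ring
        _ = _ := by rw [hcomb, hval]
    have hA : fderiv ℝ φ (0, y) (1, 0) = bt * y ^ (bt - 1) * Real.sin θt := by
      rw [aux_fderiv_s12 bt θt φ hφ (0, y) (Or.inr hy.ne') 1 0, hd]
      simp only [Complex.mul_re, Complex.mul_im, Complex.sub_re, Complex.sub_im,
        Complex.add_re, Complex.add_im, Complex.ofReal_re, Complex.ofReal_im,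
        Complex.I_re, Complex.I_im, Complex.ofReal_one, Complex.ofReal_zero,
        Complex.one_re, Complex.one_im, Complex.zero_re, Complex.zero_im]
      ring
    have hB : fderiv ℝ φ (0, y) (0, 1) = bt * y ^ (bt - 1) * Real.cos θt := by
      rw [aux_fderiv_s12 bt θt φ hφ (0, y) (Or.inr hy.ne') 0 1, hd]
      simp only [Complex.mul_re, Complex.mul_im, Complex.sub_re, Complex.sub_im,
        Complex.add_re, Complex.add_im, Complex.ofReal_re, Complex.ofReal_im,
        Complex.I_re, Complex.I_im, Complex.ofReal_one, Complex.ofReal_zero,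
        Complex.one_re, Complex.one_im, Complex.zero_re, Complex.zero_im]
      ring
    rw [hA, hB, hc, hsin]
    nlinarith [mul_nonneg (mul_nonneg (mul_nonneg hbtpos.le hcos.le) hyp.le)
      (sub_nonneg.2 htanΘ)]
end
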